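/- On a weak para-S-manifold, every ξ_i is a Killing vector field, ker f is integrable, and both ker f and its orthogonal complement f(TM) are totally geodesic distributions; thus ker f defines a Riemannian totally geodesic foliation. -/

import Mathlib

open scoped BigOperators

noncomputable section

variable (C V : Type*) [CommRing C] [Algebra ℝ C] [AddCommGroup V]
  [Module ℝ V] [Module C V] [IsScalarTower ℝ C V]

/-- A metric weak para-f-structure on a manifold, modelled algebraically:
`C` plays the role of the ring of smooth functions, `V` the `C`-module of vector fields
with Lie bracket `b` and derivation action `act` of vector fields on functions,
`g` is a compatible pseudo-Riemannian metric (with `f` of rank `2n`, encoded by `hrank`)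
and `nabla` its Levi-Civita connection (torsion-free and metric). -/
structure MWPF (p : ℕ) where
  f : V →ₗ[C] V
  Q : V →ₗ[C] V
  ξ : Fin p → V
  η : Fin p → V →ₗ[C] C
  g : V →ₗ[C] V →ₗ[C] C
  b : V → V → V
  act : V → C → C
  nabla : V → V → V
  hQbij : Function.Bijective Q
  hf2 : ∀ X, f (f X) = Q X - ∑ i, η i X • ξ i
  hf3 : ∀ X, f (f (f X)) = f (Q X)
  hetaxi : ∀ i j, η i (ξ j) = if i = j then (1 : C) else 0
  hQxi : ∀ i, Q (ξ i) = ξ i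
  hrange : ∀ X : V, X ∈ LinearMap.range f ↔ ∀ i, η i X = 0
  hgsymm : ∀ X Y, g X Y = g Y X
  hgnondeg : ∀ X, (∀ Y, g X Y = 0) → X = 0
  hrank : ∀ Z, (∀ i, η i Z = 0) → (∀ Y, g Z (f Y) = 0) → Z = 0
  hgcompat : ∀ X Y, g (f X) (f Y) = -(g X (Q Y)) + ∑ i, η i X * η i Y
  hbskew : ∀ X Y, b X Y = - b Y X
  hbaddl : ∀ X Y Z, b (X + Y) Z = b X Z + b Y Z
  hjacobi : ∀ X Y Z, b X (b Y Z) + b Y (b Z X) + b Z (b X Y) = 0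
  hactadd : ∀ X a c, act X (a + c) = act X a + act X c
  hactmul : ∀ X a c, act X (a * c) = act X a * c + a * act X c
  hactX : ∀ (a : C) X Y c, act (a • X + Y) c = a * act X c + act Y c
  hbleib : ∀ X (a : C) Y, b X (a • Y) = act X a • Y + a • b X Y
  hnab1 : ∀ (a : C) X X' Y, nabla (a • X + X') Y = a • nabla X Y + nabla X' Y
  hnabadd : ∀ X Y Z, nabla X (Y + Z) = nabla X Y + nabla X Z
  hnableib : ∀ X (a : C) Y, nabla X (a • Y) = act X a • Y + a • nabla X Y
  htors : ∀ X Y, nabla X Y - nabla Y X = b X Y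
  hmetric : ∀ X Y Z, act X (g Y Z) = g (nabla X Y) Z + g Y (nabla X Z)

namespace MWPF

variable {C V} {p : ℕ} (s : MWPF C V p)

/-- The fundamental 2-form `Φ(X,Y) = g(X, fY)`. -/
def Phi (X Y : V) : C := s.g X (s.f Y)

/-- `dη^i(X,Y) = (1/2)(X(η^i Y) - Y(η^i X) - η^i [X,Y])`. -/
def dEta (i : Fin p) (X Y : V) : C :=
  (2⁻¹ : ℝ) • (s.act X (s.η i Y) - s.act Y (s.η i X) - s.η i (s.b X Y))

/-- The Nijenhuis torsion `[f,f]`. -/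
def Nij (X Y : V) : V :=
  s.f (s.f (s.b X Y)) + s.b (s.f X) (s.f Y) - s.f (s.b (s.f X) Y) - s.f (s.b X (s.f Y))

/-- `N^(1)(X,Y) = [f,f](X,Y) - 2 Σ_i dη^i(X,Y) ξ_i`. -/
def N1 (X Y : V) : V := s.Nij X Y - (2 : ℝ) • ∑ i, s.dEta i X Y • s.ξ i

/-- The difference tensor `Q̃ = Q - id`. -/
def Qt (X : V) : V := s.Q X - X

/-- The Lie derivative of `f`: `(£_Z f)X = [Z, fX] - f[Z,X]`. -/
def Lief (Z X : V) : V := s.b Z (s.f X) - s.f (s.b Z X)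

/-- The Lie derivative of `g`: `(£_Z g)(X,Y) = Z(g(X,Y)) - g([Z,X],Y) - g(X,[Z,Y])`. -/
def Lieg (Z X Y : V) : C := s.act Z (s.g X Y) - s.g (s.b Z X) Y - s.g X (s.b Z Y)

/-- `N^(2)_i(X,Y) = (£_{fX} η^i)Y - (£_{fY} η^i)X`. -/
def N2 (i : Fin p) (X Y : V) : C :=
  (s.act (s.f X) (s.η i Y) - s.η i (s.b (s.f X) Y))
    - (s.act (s.f Y) (s.η i X) - s.η i (s.b (s.f Y) X))

/-- The exterior differential of the fundamental 2-form. -/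
def dPhi (X Y Z : V) : C := (3⁻¹ : ℝ) •
  (s.act X (s.Phi Y Z) + s.act Y (s.Phi Z X) + s.act Z (s.Phi X Y)
    - s.Phi (s.b X Y) Z - s.Phi (s.b Z X) Y - s.Phi (s.b Y Z) X)

/-- The tensor `h_i = (1/2) £_{ξ_i} f`. -/
def hmap (i : Fin p) (X : V) : V := (2⁻¹ : ℝ) • s.Lief (s.ξ i) X

/-- The tensor `N^(5)`. -/
def N5 (X Y Z : V) : C :=
  s.act (s.f Z) (s.g X (s.Qt Y)) - s.act (s.f Y) (s.g X (s.Qt Z))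
    + s.g (s.b X (s.f Z)) (s.Qt Y) - s.g (s.b X (s.f Y)) (s.Qt Z)
    + s.g (s.b Y (s.f Z) - s.b Z (s.f Y) - s.f (s.b Y Z)) (s.Qt X)

/-- The curvature tensor of `nabla`. -/
def Rm (X Y Z : V) : V :=
  s.nabla X (s.nabla Y Z) - s.nabla Y (s.nabla X Z) - s.nabla (s.b X Y) Z

end MWPF
namespace MWPF

set_option linter.unusedSectionVars false

variable {C V : Type*} [CommRing C] [Algebra ℝ C] [AddCommGroup V]
  [Module ℝ V] [Module C V] [IsScalarTower ℝ C V] {p : ℕ} (s : MWPF C V p)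

lemma half_smul_eq {c d : C} (h : (2⁻¹ : ℝ) • c = d) : c = d + d := by
  have h2 : ((2:ℝ)) • ((2⁻¹:ℝ) • c) = c := by
    rw [smul_smul]; norm_num
  rw [h, two_smul] at h2; exact h2.symm

lemma add_self_eq_zero {c : C} (h : c + c = 0) : c = 0 := by
  have h2 : ((2⁻¹:ℝ)) • (c + c) = c := by
    rw [← two_smul ℝ c, smul_smul]; norm_num
  rw [h, smul_zero] at h2; exact h2.symm

lemma act_zero_fun (X : V) : s.act X 0 = 0 := by
  have h : s.act X 0 = s.act X 0 + s.act X 0 := by simpa using s.hactadd X 0 0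
  exact left_eq_add.mp h

lemma act_one (X : V) : s.act X 1 = 0 := by
  have h : s.act X 1 = s.act X 1 + s.act X 1 := by simpa using s.hactmul X 1 1
  exact left_eq_add.mp h

lemma act_neg (X : V) (a : C) : s.act X (-a) = - s.act X a := by
  have h : s.act X (-a) + s.act X a = 0 := by
    rw [← s.hactadd, neg_add_cancel, s.act_zero_fun]
  exact eq_neg_of_add_eq_zero_left h

lemma act_sub (X : V) (a b : C) : s.act X (a - b) = s.act X a - s.act X b := by
  rw [sub_eq_add_neg, s.hactadd, s.act_neg, ← sub_eq_add_neg]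

lemma b_zero_left (Z : V) : s.b 0 Z = 0 := by
  have h := s.hbaddl 0 0 Z
  rw [add_zero] at h
  exact left_eq_add.mp h

lemma b_zero_right (Z : V) : s.b Z 0 = 0 := by
  rw [s.hbskew, s.b_zero_left, neg_zero]

lemma b_add_right (X Y Z : V) : s.b X (Y + Z) = s.b X Y + s.b X Z := by
  rw [s.hbskew X (Y+Z), s.hbaddl, s.hbskew Y X, s.hbskew Z X]; abel

lemma b_neg_right (X Y : V) : s.b X (-Y) = - s.b X Y := by
  have h := s.b_add_right X (-Y) Y
  rw [neg_add_cancel, s.b_zero_right] at h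
  exact eq_neg_of_add_eq_zero_left h.symm

lemma eta_f (i : Fin p) (X : V) : s.η i (s.f X) = 0 :=
  (s.hrange (s.f X)).mp ⟨X, rfl⟩ i

lemma eta_xi_self (i : Fin p) : s.η i (s.ξ i) = 1 := by
  rw [s.hetaxi]; simp

lemma sum_eta_xi (j : Fin p) : (∑ i, s.η i (s.ξ j) • s.ξ i) = s.ξ j := by
  simp [s.hetaxi, ite_smul]

lemma f_xi (j : Fin p) : s.f (s.ξ j) = 0 := by
  have h1 : s.f (s.f (s.ξ j)) = 0 := by
    rw [s.hf2, s.hQxi, s.sum_eta_xi, sub_self]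
  apply s.hgnondeg
  intro Z
  obtain ⟨Y, rfl⟩ := s.hQbij.2 Z
  have h2 := s.hgcompat (s.f (s.ξ j)) Y
  rw [h1] at h2
  simp [s.eta_f] at h2
  exact h2

lemma g_xi (j : Fin p) (X : V) : s.g X (s.ξ j) = s.η j X := by
  have h := s.hgcompat X (s.ξ j)
  rw [s.f_xi, s.hQxi] at h
  simp [s.hetaxi] at h
  linear_combination h

end MWPF

namespace MWPF
section
set_option linter.unusedSectionVars false

variable {C V : Type*} [CommRing C] [Algebra ℝ C] [AddCommGroup V]
  [Module ℝ V] [Module C V] [IsScalarTower ℝ C V] {p : ℕ} (s : MWPF C V p)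

lemma g_xi' (j : Fin p) (X : V) : s.g (s.ξ j) X = s.η j X := by
  rw [s.hgsymm, s.g_xi]

lemma g_xi_f (i : Fin p) (Y : V) : s.g (s.ξ i) (s.f Y) = 0 := by
  rw [s.g_xi', s.eta_f]

lemma Qf_comm (X : V) : s.Q (s.f X) = s.f (s.Q X) := by
  have h2 := s.hf2 (s.f X)
  simp only [s.eta_f, zero_smul, Finset.sum_const_zero, sub_zero] at h2
  rw [← h2]; exact s.hf3 X

lemma Q_sa (X Y : V) : s.g X (s.Q Y) = s.g (s.Q X) Y := by
  have h1 := s.hgcompat X Y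
  have h2 := s.hgcompat Y X
  rw [s.hgsymm (s.f X) (s.f Y)] at h1
  have hsum : (∑ i, s.η i X * s.η i Y) = ∑ i, s.η i Y * s.η i X :=
    Finset.sum_congr rfl (fun i _ => mul_comm _ _)
  rw [s.hgsymm (s.Q X) Y]
  linear_combination h1 - h2 + hsum

lemma g_Qf (X Y : V) : s.g (s.Q X) (s.f Y) = -(s.g (s.f X) (s.Q Y)) := by
  have h := s.hgcompat (s.f X) Y
  rw [s.hf2 X] at h
  simp only [map_sub, LinearMap.sub_apply, map_sum, LinearMap.coe_sum,
    Finset.sum_apply, map_smul, LinearMap.smul_apply, smul_eq_mul, s.eta_f,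
    zero_mul, Finset.sum_const_zero, add_zero, s.g_xi_f, mul_zero, sub_zero] at h
  exact h

lemma g_skew (X Y : V) : s.g X (s.f Y) = -(s.g (s.f X) Y) := by
  obtain ⟨X', rfl⟩ := s.hQbij.2 X
  have h := s.g_Qf X' Y
  rw [s.Q_sa (s.f X') Y, s.Qf_comm] at h
  exact h

lemma dstar (hS : ∀ (i : Fin p) (X Y : V), s.dEta i X Y = s.Phi X Y)
    (i : Fin p) (X Y : V) :
    s.act X (s.η i Y) - s.act Y (s.η i X) - s.η i (s.b X Y)
      = s.g X (s.f Y) + s.g X (s.f Y) := by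
  have h := hS i X Y
  simp only [dEta, Phi] at h
  exact half_smul_eq h

lemma act_xi_eta (hS : ∀ (i : Fin p) (X Y : V), s.dEta i X Y = s.Phi X Y)
    (i j : Fin p) (X : V) :
    s.act (s.ξ j) (s.η i X) = s.η i (s.b (s.ξ j) X) := by
  have h := s.dstar hS i X (s.ξ j)
  rw [s.f_xi] at h
  rw [s.hetaxi] at h
  have hax : s.act X (if i = j then (1:C) else 0) = 0 := by
    split_ifs
    · exact s.act_one X
    · exact s.act_zero_fun X
  have hsk : s.η i (s.b X (s.ξ j)) = - s.η i (s.b (s.ξ j) X) := by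
    rw [s.hbskew X (s.ξ j), map_neg]
  rw [hax, hsk] at h
  simp only [map_zero] at h
  linear_combination -h

end
end MWPF

namespace MWPF
section
set_option linter.unusedSectionVars false

variable {C V : Type*} [CommRing C] [Algebra ℝ C] [AddCommGroup V]
  [Module ℝ V] [Module C V] [IsScalarTower ℝ C V] {p : ℕ} (s : MWPF C V p)
  (hN : ∀ X Y : V, s.N1 X Y = 0)
  (hS : ∀ (i : Fin p) (X Y : V), s.dEta i X Y = s.Phi X Y)

include hN hS

lemma b_xi_xi (i j : Fin p) : s.b (s.ξ i) (s.ξ j) = 0 := by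
  have hn := hN (s.ξ i) (s.ξ j)
  simp only [N1, Nij] at hn
  have hd : ∀ k : Fin p, s.dEta k (s.ξ i) (s.ξ j) = 0 := by
    intro k
    rw [hS k]
    show s.g _ (s.f _) = 0
    rw [s.f_xi, map_zero]
  simp only [hd, zero_smul, Finset.sum_const_zero, smul_zero, sub_zero] at hn
  rw [s.f_xi i, s.f_xi j] at hn
  simp only [s.b_zero_left, s.b_zero_right, map_zero, add_zero, sub_zero] at hn
  rw [s.hf2] at hn
  have hw : ∀ k, s.η k (s.b (s.ξ i) (s.ξ j)) = 0 := by
    intro k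
    rw [← s.act_xi_eta hS k i (s.ξ j), s.hetaxi]
    split_ifs
    · exact s.act_one _
    · exact s.act_zero_fun _
  simp only [hw, zero_smul, Finset.sum_const_zero, sub_zero] at hn
  exact s.hQbij.1 (by rw [hn, map_zero])

lemma lie_f (i : Fin p) (X : V) :
    s.b (s.ξ i) (s.f X) = s.f (s.b (s.ξ i) X) := by
  have hn := hN (s.ξ i) X
  simp only [N1, Nij] at hn
  have hd : ∀ k : Fin p, s.dEta k (s.ξ i) X = 0 := by
    intro k
    rw [hS k]
    show s.g _ (s.f _) = 0
    rw [s.g_xi_f]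
  simp only [hd, zero_smul, Finset.sum_const_zero, smul_zero, sub_zero] at hn
  rw [s.f_xi i] at hn
  simp only [s.b_zero_left, map_zero, add_zero, sub_zero] at hn
  -- hn : f (f (b ξi X)) - f (b ξi (f X)) = 0
  have hL : s.b (s.ξ i) (s.f X) - s.f (s.b (s.ξ i) X) = 0 := by
    apply s.hrank
    · intro k
      rw [map_sub, s.eta_f, sub_zero, ← s.act_xi_eta hS k i (s.f X), s.eta_f,
        s.act_zero_fun]
    · intro Y
      rw [s.g_skew, map_sub]
      have h2 : s.f (s.b (s.ξ i) (s.f X)) = s.f (s.f (s.b (s.ξ i) X)) :=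
        (sub_eq_zero.mp hn).symm
      rw [h2, sub_self, map_zero, LinearMap.zero_apply, neg_zero]
  exact sub_eq_zero.mp hL

end
end MWPF

namespace MWPF
section
set_option linter.unusedSectionVars false

variable {C V : Type*} [CommRing C] [Algebra ℝ C] [AddCommGroup V]
  [Module ℝ V] [Module C V] [IsScalarTower ℝ C V] {p : ℕ} (s : MWPF C V p)

lemma anchor (i : Fin p) (X Y : V) (c : C) :
    s.act X (s.act Y c) - s.act Y (s.act X c) - s.act (s.b X Y) c = 0 := by
  have t1 : s.b X (s.b Y (c • s.ξ i)) =
      s.act X (s.act Y c) • s.ξ i + s.act Y c • s.b X (s.ξ i)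
        + s.act X c • s.b Y (s.ξ i) + c • s.b X (s.b Y (s.ξ i)) := by
    rw [s.hbleib Y c (s.ξ i), s.b_add_right, s.hbleib X (s.act Y c) (s.ξ i),
      s.hbleib X c (s.b Y (s.ξ i))]
    abel
  have t2 : s.b Y (s.b (c • s.ξ i) X) =
      -(s.act Y (s.act X c) • s.ξ i) - s.act X c • s.b Y (s.ξ i)
        - s.act Y c • s.b X (s.ξ i) - c • s.b Y (s.b X (s.ξ i)) := by
    rw [s.hbskew (c • s.ξ i) X, s.hbleib X c (s.ξ i), s.b_neg_right, s.b_add_right,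
      s.hbleib Y (s.act X c) (s.ξ i), s.hbleib Y c (s.b X (s.ξ i))]
    abel
  have t3 : s.b (c • s.ξ i) (s.b X Y) =
      -(s.act (s.b X Y) c • s.ξ i) - c • s.b (s.b X Y) (s.ξ i) := by
    rw [s.hbskew (c • s.ξ i) (s.b X Y), s.hbleib (s.b X Y) c (s.ξ i)]
    abel
  have c1 : s.b Y (s.b (s.ξ i) X) = -(s.b Y (s.b X (s.ξ i))) := by
    rw [s.hbskew (s.ξ i) X, s.b_neg_right]
  have c2 : s.b (s.ξ i) (s.b X Y) = -(s.b (s.b X Y) (s.ξ i)) := s.hbskew _ _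
  have key : (s.act X (s.act Y c) - s.act Y (s.act X c) - s.act (s.b X Y) c) • s.ξ i
      = (s.b X (s.b Y (c • s.ξ i)) + s.b Y (s.b (c • s.ξ i) X)
          + s.b (c • s.ξ i) (s.b X Y))
        - c • (s.b X (s.b Y (s.ξ i)) + s.b Y (s.b (s.ξ i) X)
          + s.b (s.ξ i) (s.b X Y)) := by
    rw [t1, t2, t3, c1, c2]
    module
  rw [s.hjacobi X Y (c • s.ξ i), s.hjacobi X Y (s.ξ i), smul_zero, sub_zero] at key
  have h3 := congrArg (s.η i) key
  rw [map_smul, smul_eq_mul, s.eta_xi_self, mul_one, map_zero] at h3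
  exact h3

end
end MWPF

namespace MWPF
section
set_option linter.unusedSectionVars false

variable {C V : Type*} [CommRing C] [Algebra ℝ C] [AddCommGroup V]
  [Module ℝ V] [Module C V] [IsScalarTower ℝ C V] {p : ℕ} (s : MWPF C V p)
  (hN : ∀ X Y : V, s.N1 X Y = 0)
  (hS : ∀ (i : Fin p) (X Y : V), s.dEta i X Y = s.Phi X Y)

include hN hS

lemma lieg_f (i : Fin p) (X Y : V) : s.Lieg (s.ξ i) X (s.f Y) = 0 := by
  have jacη : s.η i (s.b (s.ξ i) (s.b X Y)) + s.η i (s.b X (s.b Y (s.ξ i)))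
      + s.η i (s.b Y (s.b (s.ξ i) X)) = 0 := by
    have h := congrArg (s.η i) (s.hjacobi (s.ξ i) X Y)
    simpa [map_add] using h
  have hP1 : s.η i (s.b (s.ξ i) (s.b X Y)) = s.act (s.ξ i) (s.η i (s.b X Y)) :=
    (s.act_xi_eta hS i i (s.b X Y)).symm
  have hA := s.dstar hS i X Y
  have hA' : s.η i (s.b X Y) = s.act X (s.η i Y) - s.act Y (s.η i X)
      - (s.g X (s.f Y) + s.g X (s.f Y)) := by linear_combination -hA
  have e1 : s.act (s.ξ i) (s.η i (s.b X Y)) =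
      s.act (s.ξ i) (s.act X (s.η i Y)) - s.act (s.ξ i) (s.act Y (s.η i X))
        - (s.act (s.ξ i) (s.g X (s.f Y)) + s.act (s.ξ i) (s.g X (s.f Y))) := by
    rw [hA', s.act_sub, s.act_sub, s.hactadd]
  have hconv2 : s.η i (s.b X (s.b Y (s.ξ i)))
      = -(s.η i (s.b X (s.b (s.ξ i) Y))) := by
    rw [s.hbskew Y (s.ξ i), s.b_neg_right, map_neg]
  have hB := s.dstar hS i X (s.b (s.ξ i) Y)
  have hgf : s.g X (s.f (s.b (s.ξ i) Y)) = s.g X (s.b (s.ξ i) (s.f Y)) := by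
    rw [s.lie_f hN hS i Y]
  have hBX : s.act X (s.η i (s.b (s.ξ i) Y))
      = s.act X (s.act (s.ξ i) (s.η i Y)) := by
    rw [s.act_xi_eta hS i i Y]
  have hC := s.dstar hS i Y (s.b (s.ξ i) X)
  have hsk : s.g Y (s.f (s.b (s.ξ i) X)) = -(s.g (s.b (s.ξ i) X) (s.f Y)) := by
    rw [s.g_skew Y (s.b (s.ξ i) X), s.hgsymm (s.f Y) (s.b (s.ξ i) X)]
  have hCY : s.act Y (s.η i (s.b (s.ξ i) X))
      = s.act Y (s.act (s.ξ i) (s.η i X)) := by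
    rw [s.act_xi_eta hS i i X]
  have anc1 := s.anchor i (s.ξ i) X (s.η i Y)
  have anc2 := s.anchor i (s.ξ i) Y (s.η i X)
  have hdouble : s.Lieg (s.ξ i) X (s.f Y) + s.Lieg (s.ξ i) X (s.f Y) = 0 := by
    simp only [Lieg]
    linear_combination -jacη + hP1 + e1 + hconv2 + hB - hBX + 2*hgf - hC - 2*hsk
      + hCY + anc1 - anc2
  exact add_self_eq_zero hdouble

end
end MWPF

namespace MWPF
section
set_option linter.unusedSectionVars false

variable {C V : Type*} [CommRing C] [Algebra ℝ C] [AddCommGroup V]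
  [Module ℝ V] [Module C V] [IsScalarTower ℝ C V] {p : ℕ} (s : MWPF C V p)
  (hN : ∀ X Y : V, s.N1 X Y = 0)
  (hS : ∀ (i : Fin p) (X Y : V), s.dEta i X Y = s.Phi X Y)

include hN hS

lemma lieg_xi (i k : Fin p) (X : V) : s.Lieg (s.ξ i) X (s.ξ k) = 0 := by
  simp only [Lieg]
  rw [s.g_xi, s.b_xi_xi hN hS i k, map_zero, s.act_xi_eta hS k i X, s.g_xi]
  ring

lemma lieg_zero (i : Fin p) (X Y : V) : s.Lieg (s.ξ i) X Y = 0 := by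
  have hadd : ∀ Y1 Y2 : V, s.Lieg (s.ξ i) X (Y1 + Y2)
      = s.Lieg (s.ξ i) X Y1 + s.Lieg (s.ξ i) X Y2 := by
    intro Y1 Y2
    simp only [Lieg, map_add, s.b_add_right, s.hactadd]
    ring
  have hsmul : ∀ (c : C) (Y1 : V), s.Lieg (s.ξ i) X (c • Y1)
      = c * s.Lieg (s.ξ i) X Y1 := by
    intro c Y1
    simp only [Lieg, map_smul, smul_eq_mul, s.hbleib, s.hactmul, map_add]
    ring
  have h0 : s.Lieg (s.ξ i) X 0 = 0 := by
    have h := hadd 0 0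
    rw [add_zero] at h
    exact left_eq_add.mp h
  have hsum : ∀ (t : Finset (Fin p)) (cc : Fin p → C),
      s.Lieg (s.ξ i) X (∑ k ∈ t, cc k • s.ξ k) = 0 := by
    intro t cc
    induction t using Finset.induction_on with
    | empty => simpa using h0
    | insert _ _ hnotmem ih =>
      rw [Finset.sum_insert hnotmem, hadd, hsmul, s.lieg_xi hN hS, mul_zero, ih,
        add_zero]
  have hmem : (Y - ∑ k, s.η k Y • s.ξ k) ∈ LinearMap.range s.f := by
    rw [s.hrange]
    intro m
    rw [map_sub, map_sum]
    have : ∀ k : Fin p, s.η m (s.η k Y • s.ξ k)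
        = if m = k then s.η k Y else 0 := by
      intro k
      rw [map_smul, smul_eq_mul, s.hetaxi m k]
      split_ifs <;> ring
    rw [Finset.sum_congr rfl (fun k _ => this k), Finset.sum_ite_eq]
    simp
  obtain ⟨W, hW⟩ := hmem
  have hY : Y = s.f W + ∑ k, s.η k Y • s.ξ k := by rw [hW]; abel
  rw [hY, hadd, s.lieg_f hN hS i X W, hsum, add_zero]

end
end MWPF

namespace MWPF
section
set_option linter.unusedSectionVars false

variable {C V : Type*} [CommRing C] [Algebra ℝ C] [AddCommGroup V]
  [Module ℝ V] [Module C V] [IsScalarTower ℝ C V] {p : ℕ} (s : MWPF C V p)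
  (hN : ∀ X Y : V, s.N1 X Y = 0)
  (hS : ∀ (i : Fin p) (X Y : V), s.dEta i X Y = s.Phi X Y)

lemma g_nabxi (hS : ∀ (i : Fin p) (X Y : V), s.dEta i X Y = s.Phi X Y)
    (i : Fin p) (X Y : V) :
    s.g (s.nabla X (s.ξ i)) Y - s.g (s.nabla Y (s.ξ i)) X
      = s.g X (s.f Y) + s.g X (s.f Y) := by
  have h1 := s.hmetric X (s.ξ i) Y
  have h2 := s.hmetric Y (s.ξ i) X
  rw [s.g_xi' i Y, s.g_xi' i (s.nabla X Y)] at h1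
  rw [s.g_xi' i X, s.g_xi' i (s.nabla Y X)] at h2
  have ht : s.η i (s.nabla X Y) - s.η i (s.nabla Y X) = s.η i (s.b X Y) := by
    rw [← map_sub, s.htors]
  have hstar := s.dstar hS i X Y
  linear_combination -h1 + h2 + hstar - ht

include hN hS

lemma g_nabxi_xi (i j : Fin p) (X : V) :
    s.g (s.nabla X (s.ξ i)) (s.ξ j) = 0 := by
  have h1 := s.hmetric X (s.ξ i) (s.ξ j)
  have hact : s.act X (s.g (s.ξ i) (s.ξ j)) = 0 := by
    rw [s.g_xi' i (s.ξ j), s.hetaxi]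
    split_ifs
    · exact s.act_one X
    · exact s.act_zero_fun X
  rw [hact, s.hgsymm (s.ξ i) (s.nabla X (s.ξ j))] at h1
  have r1 := s.g_nabxi hS i X (s.ξ j)
  rw [s.f_xi j, map_zero] at r1
  have r2 := s.g_nabxi hS j X (s.ξ i)
  rw [s.f_xi i, map_zero] at r2
  have r3 : s.nabla (s.ξ i) (s.ξ j) = s.nabla (s.ξ j) (s.ξ i) := by
    have h := s.htors (s.ξ i) (s.ξ j)
    rw [s.b_xi_xi hN hS i j] at h
    exact sub_eq_zero.mp h
  rw [r3] at r2
  apply add_self_eq_zero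
  linear_combination r1 - r2 - h1

lemma nabxixi (i j : Fin p) : s.nabla (s.ξ j) (s.ξ i) = 0 := by
  apply s.hgnondeg
  intro Z
  have h := s.g_nabxi hS i Z (s.ξ j)
  rw [s.f_xi j, map_zero] at h
  have h2 := s.g_nabxi_xi hN hS i j Z
  linear_combination h2 - h

end
end MWPF

/-- on a weak para-S-manifold (normal, `dη^i = Φ`), every `ξ_i` is Killing,
`ker f` is integrable, and both `ker f` and `f(TM)` are totally geodesic; thus `ker f`
defines a Riemannian totally geodesic foliation. -/
theorem paraS_Killing_foliation {C V : Type*} [CommRing C] [Algebra ℝ C] [AddCommGroup V]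
    [Module ℝ V] [Module C V] [IsScalarTower ℝ C V] {p : ℕ} (s : MWPF C V p)
    (hN : ∀ X Y, s.N1 X Y = 0)
    (hS : ∀ (i : Fin p) (X Y : V), s.dEta i X Y = s.Phi X Y) :
    (∀ (i : Fin p) (X Y : V), s.Lieg (s.ξ i) X Y = 0) ∧
    (∀ i j : Fin p, s.b (s.ξ i) (s.ξ j) ∈ Submodule.span C (Set.range s.ξ)) ∧
    (∀ i j : Fin p,
      s.nabla (s.ξ i) (s.ξ j) + s.nabla (s.ξ j) (s.ξ i)
        ∈ Submodule.span C (Set.range s.ξ)) ∧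
    (∀ X Y : V, (∀ k, s.η k X = 0) → (∀ k, s.η k Y = 0) →
      ∀ i : Fin p, s.g (s.nabla X Y + s.nabla Y X) (s.ξ i) = 0) := by
  refine ⟨fun i X Y => s.lieg_zero hN hS i X Y, fun i j => ?_, fun i j => ?_, ?_⟩
  · rw [s.b_xi_xi hN hS i j]
    exact Submodule.zero_mem _
  · rw [s.nabxixi hN hS j i, s.nabxixi hN hS i j, add_zero]
    exact Submodule.zero_mem _
  · intro X Y hX hY i
    have h1 := s.hmetric X Y (s.ξ i)
    have h2 := s.hmetric Y X (s.ξ i)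
    rw [s.g_xi i Y, hY i, s.act_zero_fun] at h1
    rw [s.g_xi i X, hX i, s.act_zero_fun] at h2
    have hm := s.hmetric (s.ξ i) X Y
    have t1 : s.g (s.b (s.ξ i) X) Y
        = s.g (s.nabla (s.ξ i) X) Y - s.g (s.nabla X (s.ξ i)) Y := by
      rw [← s.htors, map_sub, LinearMap.sub_apply]
    have t2 : s.g X (s.b (s.ξ i) Y)
        = s.g X (s.nabla (s.ξ i) Y) - s.g X (s.nabla Y (s.ξ i)) := by
      rw [← s.htors, map_sub]
    have hz := s.lieg_zero hN hS i X Y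
    simp only [MWPF.Lieg] at hz
    have hs1 : s.g Y (s.nabla X (s.ξ i)) = s.g (s.nabla X (s.ξ i)) Y :=
      s.hgsymm _ _
    rw [map_add, LinearMap.add_apply]
    linear_combination -h1 - h2 - hz + hm - t1 - t2 - hs1
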